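/- (CBF implies forward invariance.) Let f : ℝ^{n_x} × ℝ^{n_u} → ℝ^{n_x}, let h_S : ℝ^{n_x} → ℝ be continuously differentiable, let S = {x ∈ ℝ^{n_x} : h_S(x) ≥ 0}, and assume ∇h_S(x) ≠ 0 for every x in the topological boundary ∂S of S. Let α : ℝ → ℝ be an extended class 𝒦 function and let κ : ℝ^{n_x} → ℝ^{n_u} be a Lipschitz continuous control policy such that for every x ∈ S one has ⟨∇h_S(x), f(x, κ(x))⟩ ≥ −α(h_S(x)). Assume the closed-loop vector field x ↦ f(x, κ(x)) is locally Lipschitz with all maximal forward solutions defined on [0,∞). Then S is forward invariant for ẋ = f(x, κ(x)): every solution with x(0) ∈ S satisfies x(t) ∈ S for all t ≥ 0. -/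

import Mathlib

open scoped RealInnerProductSpace
open Metric Set Filter Topology

variable {E : Type*} [NormedAddCommGroup E] [InnerProductSpace ℝ E] [CompleteSpace E]

/-- Sub-tangentiality: at a point of `S = {hS ≥ 0}` which is either interior or a boundary
point where the gradient is nonzero and the field points weakly inward, the point moved a
little along `G` stays within `ε τ` of `S`. -/
lemma subtangent {hS : E → ℝ} (hC1 : ContDiff ℝ 1 hS) {S : Set E}
    (hSdef : S = {x | hS x ≥ 0})
    {q : E} (hq : q ∈ S) {G : E}
    (hG : q ∈ frontier S → (0:ℝ) ≤ ⟪gradient hS q, G⟫ ∧ gradient hS q ≠ 0)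
    {ε : ℝ} (hε : 0 < ε) :
    ∀ᶠ τ in 𝓝[>] (0:ℝ), ∃ w ∈ S, ‖q + τ • G - w‖ ≤ ε * τ := by
  by_cases hint : q ∈ interior S
  · have hc : ContinuousAt (fun τ : ℝ => q + τ • G) 0 := by fun_prop
    have h0 : (fun τ : ℝ => q + τ • G) 0 = q := by simp
    have hev : ∀ᶠ τ in 𝓝 (0:ℝ), q + τ • G ∈ interior S := by
      have := hc.preimage_mem_nhds (h0 ▸ isOpen_interior.mem_nhds hint)
      filter_upwards [this] with τ hτ using hτ
    filter_upwards [nhdsWithin_le_nhds hev, self_mem_nhdsWithin] with τ hτ hτpos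
    exact ⟨q + τ • G, interior_subset hτ, by simp [le_of_lt (mul_pos hε hτpos)]⟩
  · have hfr : q ∈ frontier S := by
      rw [frontier, mem_diff]
      exact ⟨subset_closure hq, hint⟩
    obtain ⟨hip, hne⟩ := hG hfr
    set gq := gradient hS q with hgq
    have hm : (0:ℝ) < ‖gq‖ := norm_pos_iff.mpr hne
    set u : E := ‖gq‖⁻¹ • gq with hu
    have hnu : ‖u‖ = 1 := by
      rw [hu, norm_smul, norm_inv, norm_norm, inv_mul_cancel₀ hm.ne']
    set v : E := G + ε • u with hv
    have hinner : ⟪gq, v⟫ = ⟪gq, G⟫ + ε * ‖gq‖ := by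
      rw [hv, inner_add_right, inner_smul_right, hu, inner_smul_right,
        real_inner_self_eq_norm_sq]
      have : ‖gq‖⁻¹ * ‖gq‖ = 1 := inv_mul_cancel₀ hm.ne'
      field_simp
    have hcpos : (0:ℝ) < ⟪gq, v⟫ := by
      rw [hinner]; positivity
    -- derivative of F τ = hS (q + τ • v) at 0
    have hdiff : DifferentiableAt ℝ hS q := (hC1.differentiable one_ne_zero) q
    have hgradAt : HasFDerivAt hS (InnerProductSpace.toDual ℝ E gq) q :=
      hasGradientAt_iff_hasFDerivAt.mp hdiff.hasGradientAt
    have hcurve : HasDerivAt (fun τ : ℝ => q + τ • v) v 0 := by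
      simpa using ((hasDerivAt_id (0:ℝ)).smul_const v).const_add q
    have hF : HasDerivAt (fun τ : ℝ => hS (q + τ • v)) ⟪gq, v⟫ 0 := by
      have hgradAt' : HasFDerivAt hS (InnerProductSpace.toDual ℝ E gq) (q + (0:ℝ) • v) := by
        simpa using hgradAt
      have := hgradAt'.comp_hasDerivAt 0 hcurve
      simpa [Function.comp_def, InnerProductSpace.toDual_apply_apply] using this
    have hq0 : hS q = 0 := by
      have h1 : 0 ≤ hS q := by rw [hSdef] at hq; exact hq
      have h2 : q ∈ closure Sᶜ := by
        rw [frontier_eq_closure_inter_closure] at hfr; exact hfr.2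
      have h3 : Sᶜ ⊆ {x | hS x ≤ 0} := by
        intro z hz; rw [hSdef] at hz
        simp only [mem_compl_iff, mem_setOf_eq, ge_iff_le, not_le] at hz
        exact le_of_lt hz
      have h4 : q ∈ {x | hS x ≤ 0} :=
        closure_minimal h3 (isClosed_le (hC1.continuous) continuous_const) h2
      simp only [mem_setOf_eq] at h4
      linarith
    have hslope : Tendsto (slope (fun τ : ℝ => hS (q + τ • v)) 0) (𝓝[≠] 0) (𝓝 ⟪gq, v⟫) :=
      hasDerivAt_iff_tendsto_slope.mp hF
    have hslope' : ∀ᶠ τ in 𝓝[>] (0:ℝ), 0 < slope (fun τ : ℝ => hS (q + τ • v)) 0 τ := by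
      have := (hslope.mono_left (nhdsWithin_mono 0 (fun τ hτ => ne_of_gt hτ))).eventually
        (eventually_gt_nhds hcpos)
      exact this
    filter_upwards [hslope', self_mem_nhdsWithin] with τ hτ hτpos
    have hmem : q + τ • v ∈ S := by
      rw [hSdef]
      have : slope (fun τ : ℝ => hS (q + τ • v)) 0 τ = τ⁻¹ * hS (q + τ • v) := by
        simp [slope_def_field, hq0, div_eq_inv_mul]
      rw [this] at hτ
      have := mul_pos hτpos hτ
      rw [← mul_assoc, mul_inv_cancel₀ hτpos.ne', one_mul] at this
      exact le_of_lt this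
    refine ⟨q + τ • v, hmem, ?_⟩
    have : q + τ • G - (q + τ • v) = -(τ • (ε • u)) := by
      rw [hv]; module
    rw [this, norm_neg, norm_smul, norm_smul, hnu]
    simp [abs_of_pos (mem_Ioi.mp hτpos), abs_of_pos hε, mul_one, mul_comm]

/-- Local forward invariance from sub-tangentiality and local Lipschitzness (Nagumo). -/
lemma local_invariance [ProperSpace E] {g : E → E} (hg : LocallyLipschitz g)
    {S : Set E} (hScl : IsClosed S)
    (hsub : ∀ q ∈ S, ∀ ε > (0:ℝ), ∀ᶠ τ in 𝓝[>] (0:ℝ), ∃ w ∈ S, ‖q + τ • g q - w‖ ≤ ε * τ)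
    {x : ℝ → E} (hx : ∀ t : ℝ, 0 ≤ t → HasDerivAt x (g (x t)) t)
    {t1 : ℝ} (ht1 : 0 ≤ t1) (hmem : x t1 ∈ S) :
    ∃ δ > 0, ∀ t ∈ Icc t1 (t1 + δ), x t ∈ S := by
  set p := x t1 with hp
  obtain ⟨K, U, hU, hKlip⟩ := hg p
  obtain ⟨r, hr, hball⟩ := Metric.mem_nhds_iff.mp hU
  have hct1 : ContinuousAt x t1 := (hx t1 ht1).continuousAt
  obtain ⟨δ', hδ', hδ'ball⟩ := Metric.continuousAt_iff.mp hct1 (r / 4) (by linarith)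
  refine ⟨δ' / 2, by linarith, ?_⟩
  have hxball : ∀ t ∈ Icc t1 (t1 + δ' / 2), dist (x t) p < r / 4 := by
    intro t ht
    apply hδ'ball
    rw [Real.dist_eq, abs_of_nonneg (by linarith [ht.1])]
    linarith [ht.2]
  set d : ℝ → ℝ := fun t => infDist (x t) S with hd
  have hSne : S.Nonempty := ⟨p, hmem⟩
  have hcont : ContinuousOn d (Icc t1 (t1 + δ' / 2)) := by
    apply (continuous_infDist_pt S).comp_continuousOn
    intro t ht
    exact ((hx t (le_trans ht1 ht.1)).continuousAt).continuousWithinAt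
  have hdini : ∀ t ∈ Ico t1 (t1 + δ' / 2), ∀ r', K * d t < r' →
      ∃ᶠ s in 𝓝[>] t, (s - t)⁻¹ * (d s - d t) < r' := by
    intro t ht r' hr'
    have ht0 : (0:ℝ) ≤ t := le_trans ht1 ht.1
    set z := x t with hz
    have hzp : dist z p < r / 4 := hxball t (Ico_subset_Icc_self ht)
    obtain ⟨q, hqS, hqd⟩ := hScl.exists_infDist_eq_dist hSne z
    have hdt : d t = dist z q := hqd
    have hdt4 : d t < r / 4 := by
      have h5 : d t ≤ dist z p := infDist_le_dist_of_mem hmem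
      exact lt_of_le_of_lt h5 hzp
    have hdt0 : 0 ≤ d t := infDist_nonneg
    have hzU : z ∈ U := hball (by simpa [mem_ball] using lt_trans hzp (by linarith))
    have hqU : q ∈ U := by
      apply hball
      rw [mem_ball]
      calc dist q p ≤ dist q z + dist z p := dist_triangle q z p
        _ < r / 4 + r / 4 := by
            rw [dist_comm q z]
            exact add_lt_add (hdt ▸ hdt4) hzp
        _ < r := by linarith
    set ε' := (r' - K * d t) / 3 with hε'def
    have hε' : 0 < ε' := by rw [hε'def]; linarith
    have hsubq := hsub q hqS ε' hε'
    have hderiv := hx t ht0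
    have hlittle := (hasDerivAt_iff_isLittleO.mp hderiv).def hε'
    have htend : Tendsto (fun s : ℝ => s - t) (𝓝[>] t) (𝓝[>] (0:ℝ)) := by
      apply tendsto_nhdsWithin_of_tendsto_nhds_of_eventually_within
      · have : Tendsto (fun s : ℝ => s - t) (𝓝 t) (𝓝 (t - t)) :=
          (continuous_id.sub continuous_const).tendsto t
        simpa using this.mono_left nhdsWithin_le_nhds
      · filter_upwards [self_mem_nhdsWithin] with s hs
        exact sub_pos.mpr (mem_Ioi.mp hs)
    apply Eventually.frequently
    filter_upwards [htend.eventually hsubq, nhdsWithin_le_nhds hlittle,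
      self_mem_nhdsWithin] with s hsubs hlit hst
    obtain ⟨w, hwS, hw⟩ := hsubs
    set τ := s - t with hτdef
    have hτ : 0 < τ := sub_pos.mpr hst
    have hds : d s ≤ dist (x s) w := infDist_le_dist_of_mem hwS
    have hlip : ‖g z - g q‖ ≤ K * d t := by
      have := hKlip.dist_le_mul z hzU q hqU
      rw [dist_eq_norm] at this
      rw [hdt]
      exact this
    have hsplit : x s - w = (x s - z - τ • g z) + ((z - q) + τ • (g z - g q))
        + (q + τ • g q - w) := by
      simp only [smul_sub]
      abel
    have hbound1 : ‖x s - z - τ • g z‖ ≤ ε' * τ := by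
      have h1 : ‖x s - z - τ • g z‖ ≤ ε' * |τ| := by
        simpa [Real.norm_eq_abs, hz] using hlit
      rwa [abs_of_pos hτ] at h1
    have hbound2 : ‖(z - q) + τ • (g z - g q)‖ ≤ d t + τ * (K * d t) := by
      calc ‖(z - q) + τ • (g z - g q)‖ ≤ ‖z - q‖ + ‖τ • (g z - g q)‖ := norm_add_le _ _
        _ ≤ d t + τ * (K * d t) := by
            apply add_le_add
            · rw [hdt, dist_eq_norm]
            · rw [norm_smul, Real.norm_eq_abs, abs_of_pos hτ]
              exact mul_le_mul_of_nonneg_left hlip hτ.le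
    have hdsdt : d s - d t ≤ (K * d t + 2 * ε') * τ := by
      have : d s ≤ ε' * τ + (d t + τ * (K * d t)) + ε' * τ := by
        calc d s ≤ dist (x s) w := hds
          _ = ‖x s - w‖ := dist_eq_norm _ _
          _ ≤ ‖x s - z - τ • g z‖ + ‖(z - q) + τ • (g z - g q)‖
              + ‖q + τ • g q - w‖ := by
                rw [hsplit]
                exact le_trans (norm_add_le _ _) (by gcongr; exact norm_add_le _ _)
          _ ≤ ε' * τ + (d t + τ * (K * d t)) + ε' * τ := by
                gcongr
      nlinarith
    have : (s - t)⁻¹ * (d s - d t) ≤ K * d t + 2 * ε' := by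
      rw [← hτdef]
      rw [inv_mul_le_iff₀ hτ, mul_comm]
      exact hdsdt
    apply lt_of_le_of_lt this
    rw [hε'def]; linarith
  have hbound : ∀ t ∈ Ico t1 (t1 + δ' / 2), K * d t ≤ K * d t + 0 := by
    intro t _; simp
  have ha : d t1 ≤ 0 := le_of_eq (infDist_zero_of_mem hmem)
  have hgron := le_gronwallBound_of_liminf_deriv_right_le (f := d)
    (f' := fun t => K * d t) (δ := 0) (K := K) (ε := 0) hcont hdini ha hbound
  intro t ht
  have hdt := hgron t ht
  rw [gronwallBound_ε0_δ0] at hdt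
  have : d t = 0 := le_antisymm hdt infDist_nonneg
  exact (hScl.mem_iff_infDist_zero hSne).mpr this

lemma frontier_hS_zero {hS : E → ℝ} (hc : Continuous hS) {S : Set E}
    (hSdef : S = {x | hS x ≥ 0}) {q : E} (hfr : q ∈ frontier S) : hS q = 0 := by
  rw [frontier_eq_closure_inter_closure] at hfr
  have h1 : q ∈ {x | 0 ≤ hS x} := by
    have : closure S ⊆ {x | 0 ≤ hS x} := by
      apply closure_minimal _ (isClosed_le continuous_const hc)
      intro z hz
      rw [hSdef] at hz
      exact hz
    exact this hfr.1
  have h2 : q ∈ {x | hS x ≤ 0} := by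
    have : closure Sᶜ ⊆ {x | hS x ≤ 0} := by
      apply closure_minimal _ (isClosed_le hc continuous_const)
      intro z hz
      rw [hSdef] at hz
      simp only [mem_compl_iff, mem_setOf_eq, ge_iff_le, not_le] at hz
      exact le_of_lt hz
    exact this hfr.2
  exact le_antisymm h2 h1
/-- **CBF implies forward invariance.**
If `hS` is a continuously differentiable control barrier function
(`⟨∇hS(x), f(x, κ(x))⟩ ≥ -α (hS x)` on `S = {x | hS x ≥ 0}` for an extended
class-𝒦 function `α`), `∇hS(x) ≠ 0` on the boundary of `S`, `κ` is Lipschitz,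
and the closed-loop vector field is locally Lipschitz with forward-global
solutions, then `S` is forward invariant for `ẋ = f(x, κ(x))`. -/
theorem cbf_implies_forward_invariance {nx nu : ℕ}
    (f : EuclideanSpace ℝ (Fin nx) → (Fin nu → ℝ) → EuclideanSpace ℝ (Fin nx))
    (hS : EuclideanSpace ℝ (Fin nx) → ℝ)
    (hC1 : ContDiff ℝ 1 hS)
    (S : Set (EuclideanSpace ℝ (Fin nx)))
    (hSdef : S = {x | hS x ≥ 0})
    (hgrad : ∀ x ∈ frontier S, gradient hS x ≠ 0)
    (α : ℝ → ℝ) (hαcont : Continuous α) (hαmono : StrictMono α) (hα0 : α 0 = 0)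
    (κ : EuclideanSpace ℝ (Fin nx) → (Fin nu → ℝ))
    (hκlip : ∃ L : NNReal, LipschitzWith L κ)
    (hcbf : ∀ x ∈ S, ⟪gradient hS x, f x (κ x)⟫ ≥ -α (hS x))
    (hcl : LocallyLipschitz (fun x => f x (κ x)))
    (hglobal : ∀ x0 : EuclideanSpace ℝ (Fin nx),
      ∃ x : ℝ → EuclideanSpace ℝ (Fin nx),
        x 0 = x0 ∧ ∀ t : ℝ, 0 ≤ t → HasDerivAt x (f (x t) (κ (x t))) t) :
    ∀ x : ℝ → EuclideanSpace ℝ (Fin nx),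
      (∀ t : ℝ, 0 ≤ t → HasDerivAt x (f (x t) (κ (x t))) t) →
      x 0 ∈ S → ∀ t : ℝ, 0 ≤ t → x t ∈ S := by
  intro x hx hx0 t2 ht2
  have hScl : IsClosed S := by
    rw [hSdef]
    exact isClosed_le continuous_const hC1.continuous
  have hsub : ∀ q ∈ S, ∀ ε > (0:ℝ), ∀ᶠ τ in 𝓝[>] (0:ℝ),
      ∃ w ∈ S, ‖q + τ • f q (κ q) - w‖ ≤ ε * τ := by
    intro q hqS ε hε
    apply subtangent hC1 hSdef hqS ?_ hε
    intro hfr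
    refine ⟨?_, hgrad q hfr⟩
    have hq0 : hS q = 0 := frontier_hS_zero hC1.continuous hSdef hfr
    have := hcbf q hqS
    rw [hq0, hα0] at this
    simpa using this
  by_contra hout
  set A := {t : ℝ | t ∈ Icc 0 t2 ∧ ∀ s ∈ Icc 0 t, x s ∈ S} with hA
  have h0A : (0:ℝ) ∈ A := by
    refine ⟨⟨le_refl 0, ht2⟩, fun s hs => ?_⟩
    rw [show s = 0 from le_antisymm hs.2 hs.1]
    exact hx0
  have hAne : A.Nonempty := ⟨0, h0A⟩
  have hAbdd : BddAbove A := ⟨t2, fun t ht => ht.1.2⟩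
  set t1 := sSup A with ht1def
  have ht1mem : t1 ∈ Icc 0 t2 :=
    ⟨le_csSup hAbdd h0A, csSup_le hAne fun t ht => ht.1.2⟩
  have hIco : ∀ s, 0 ≤ s → s < t1 → x s ∈ S := by
    intro s hs0 hst1
    obtain ⟨t, htA, hts⟩ := exists_lt_of_lt_csSup hAne hst1
    exact htA.2 s ⟨hs0, hts.le⟩
  have hxt1 : x t1 ∈ S := by
    rcases eq_or_lt_of_le ht1mem.1 with h | h
    · rw [← h]; exact hx0
    · have hct : Tendsto x (𝓝[<] t1) (𝓝 (x t1)) :=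
        ((hx t1 ht1mem.1).continuousAt.continuousWithinAt : ContinuousWithinAt x (Iio t1) t1)
      apply hScl.mem_of_tendsto hct
      filter_upwards [self_mem_nhdsWithin, nhdsWithin_le_nhds (Ioi_mem_nhds h)]
        with s hs1 hs2
      exact hIco s (le_of_lt hs2) hs1
  have ht1A : t1 ∈ A := by
    refine ⟨ht1mem, fun s hs => ?_⟩
    rcases lt_or_eq_of_le hs.2 with h | h
    · exact hIco s hs.1 h
    · rw [h]; exact hxt1
  obtain ⟨δ, hδ, hloc⟩ := local_invariance hcl hScl hsub hx ht1mem.1 hxt1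
  rcases lt_or_eq_of_le ht1mem.2 with hlt | heq
  · have hminA : min (t1 + δ) t2 ∈ A := by
      refine ⟨⟨le_min (by linarith [ht1mem.1]) ht2, min_le_right _ _⟩, ?_⟩
      intro s hs
      rcases le_or_gt s t1 with h | h
      · exact ht1A.2 s ⟨hs.1, h⟩
      · exact hloc s ⟨h.le, le_trans hs.2 (min_le_left _ _)⟩
    have h1 : min (t1 + δ) t2 ≤ t1 := le_csSup hAbdd hminA
    have h2 : t1 < min (t1 + δ) t2 := lt_min (by linarith) hlt
    linarith
  · exact hout (ht1A.2 t2 ⟨ht2, heq ▸ le_refl t2⟩)
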